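/- Let N ≥ 1, let ‖·‖ be a norm on ℝ^N, and let K > 0 satisfy (1/K)‖y‖ ≤ ‖y‖₂ ≤ K‖y‖ and (1/K)‖y‖ ≤ ‖y‖₁ ≤ K‖y‖ for all y ∈ ℝ^N, where ‖·‖₁ and ‖·‖₂ are the ℓ¹ and Euclidean norms. Let ε > 0, let U ⊆ ℝ^N be open, and let f : U → ℝ be a differentiable Lipschitz function such that for some δ > 0: for every x ∈ U and every h ∈ ℝ^N with ‖h‖ ≤ K·δ and x + h ∈ U, |f(x + h) − f(x) − Df(x)[h]| ≤ ε‖h‖. Let w ∈ ℝ^N and let C be the hypercube with vertices v_γ = w + δγ, γ ∈ {0,1}^N, and suppose C ⊆ U. Then the interpolation function Λ(f,C) restricted to C is Lipschitz with Lip(Λ(f,C)|_C) ≤ K²·ε + Lip(f). -/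

import Mathlib

/-- The coordinatewise affine interpolation `Λ(f,C)` of `f` on the hypercube with
vertices `v_γ = w + δγ`, `γ ∈ {0,1}^N`. -/
noncomputable def interpLam {N : ℕ} (w : Fin N → ℝ) (δ : ℝ) (f : (Fin N → ℝ) → ℝ)
    (x : Fin N → ℝ) : ℝ :=
  ∑ γ : Fin N → Bool,
    (∏ i, if γ i then (x i - w i) / δ else 1 - (x i - w i) / δ) *
      f (fun i => w i + if γ i then δ else 0)

open Finset

namespace Interp14

variable {N : ℕ}

noncomputable def lam (w : Fin N → ℝ) (δ : ℝ) (z : Fin N → ℝ) (i : Fin N) (b : Bool) : ℝ :=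
  if b then (z i - w i) / δ else 1 - (z i - w i) / δ

noncomputable def vert (w : Fin N → ℝ) (δ : ℝ) (γ : Fin N → Bool) : Fin N → ℝ :=
  fun i => w i + if γ i then δ else 0

lemma interp_eq (w : Fin N → ℝ) (δ : ℝ) (f : (Fin N → ℝ) → ℝ) (z : Fin N → ℝ) :
    interpLam w δ f z = ∑ γ : Fin N → Bool, (∏ i, lam w δ z i (γ i)) * f (vert w δ γ) := rfl

lemma lam_add (w : Fin N → ℝ) (δ : ℝ) (z : Fin N → ℝ) (i : Fin N) :
    lam w δ z i true + lam w δ z i false = 1 := by simp [lam]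

lemma weight_sum (w : Fin N → ℝ) (δ : ℝ) (z : Fin N → ℝ) :
    ∑ γ : Fin N → Bool, (∏ i, lam w δ z i (γ i)) = 1 := by
  have h := Finset.prod_univ_sum (fun _ : Fin N => (Finset.univ : Finset Bool))
      (fun i b => lam w δ z i b)
  rw [Fintype.piFinset_univ] at h
  rw [← h]
  simp only [Fintype.sum_bool]
  exact Finset.prod_eq_one (fun i _ => lam_add w δ z i)

/-- flip at coordinate `k` as a permutation -/
def flipk (k : Fin N) : Equiv.Perm (Fin N → Bool) :=
  Function.Involutive.toPerm (fun γ => Function.update γ k (!γ k)) (by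
    intro γ; funext j
    rcases eq_or_ne j k with h | h
    · subst h; simp
    · simp [Function.update_of_ne h])

lemma prod_flip (w : Fin N → ℝ) (δ : ℝ) (z : Fin N → ℝ) (γ : Fin N → Bool) (k : Fin N) :
    (∏ i, lam w δ z i (Function.update γ k (!γ k) i))
      = lam w δ z k (!γ k) * ∏ j ∈ Finset.univ.erase k, lam w δ z j (γ j) := by
  have h1 : (fun i => lam w δ z i (Function.update γ k (!γ k) i))
      = Function.update (fun i => lam w δ z i (γ i)) k (lam w δ z k (!γ k)) := by
    funext i
    rcases eq_or_ne i k with h | h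
    · subst h; simp
    · simp [Function.update_of_ne h]
  rw [h1, Finset.prod_update_of_mem (Finset.mem_univ k), ← Finset.erase_eq]

lemma prod_split (w : Fin N → ℝ) (δ : ℝ) (z : Fin N → ℝ) (γ : Fin N → Bool) (k : Fin N) :
    (∏ i, lam w δ z i (γ i))
      = lam w δ z k (γ k) * ∏ j ∈ Finset.univ.erase k, lam w δ z j (γ j) :=
  (Finset.mul_prod_erase Finset.univ _ (Finset.mem_univ k)).symm

end Interp14

namespace Interp14
variable {N : ℕ}

lemma deriv_rewrite (w : Fin N → ℝ) (δ : ℝ) (z u : Fin N → ℝ) (F : (Fin N → Bool) → ℝ) :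
    ∑ γ : Fin N → Bool,
      (∑ k, (∏ j ∈ Finset.univ.erase k, lam w δ z j (γ j)) *
        (if γ k then u k / δ else -(u k / δ))) * F γ
    = ∑ γ : Fin N → Bool, (∏ i, lam w δ z i (γ i)) *
        (∑ k, (u k / δ) * (if γ k then (-1:ℝ) else 1) *
          (F (Function.update γ k (!γ k)) - F γ)) := by
  simp_rw [Finset.sum_mul, Finset.mul_sum]
  rw [Finset.sum_comm]
  conv_rhs => rw [Finset.sum_comm]
  refine Finset.sum_congr rfl (fun k _ => ?_)
  have key : ∀ γ : Fin N → Bool,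
      (∏ i, lam w δ z i (γ i)) *
          ((u k / δ) * (if γ k then (-1:ℝ) else 1) * (F (Function.update γ k (!γ k)) - F γ))
        = (∏ i, lam w δ z i (γ i)) *
            ((u k / δ) * (if γ k then (-1:ℝ) else 1) * F (Function.update γ k (!γ k)))
          - (∏ i, lam w δ z i (γ i)) *
            ((u k / δ) * (if γ k then (-1:ℝ) else 1) * F γ) := fun γ => by ring
  simp_rw [key]
  rw [Finset.sum_sub_distrib]
  have reindex : (∑ γ : Fin N → Bool,
      (∏ i, lam w δ z i (γ i)) *
        ((u k / δ) * (if γ k then (-1:ℝ) else 1) * F (Function.update γ k (!γ k))))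
      = ∑ γ : Fin N → Bool,
      (∏ i, lam w δ z i (Function.update γ k (!γ k) i)) *
        ((u k / δ) * (if γ k then (1:ℝ) else -1) * F γ) := by
    rw [← Equiv.sum_comp (flipk k) (fun γ => (∏ i, lam w δ z i (γ i)) *
      ((u k / δ) * (if γ k then (-1:ℝ) else 1) * F (Function.update γ k (!γ k))))]
    refine Finset.sum_congr rfl (fun γ _ => ?_)
    have h1 : (flipk k) γ = Function.update γ k (!γ k) := rfl
    rw [h1]
    simp only [Function.update_self, Function.update_idem, Bool.not_not,
      Function.update_eq_self]
    cases hb : γ k <;> simp [hb]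
  rw [reindex, ← Finset.sum_sub_distrib]
  refine (Finset.sum_congr rfl (fun γ _ => ?_)).symm
  rw [prod_flip, prod_split]
  have hadd := lam_add w δ z k
  cases hb : γ k
  · simp only [hb, Bool.not_false, Bool.false_eq_true, if_false, if_true]
    linear_combination (-(∏ j ∈ Finset.univ.erase k, lam w δ z j (γ j)) * (u k / δ) * F γ) * hadd
  · simp only [hb, Bool.not_true, Bool.false_eq_true, if_false, if_true]
    linear_combination ((∏ j ∈ Finset.univ.erase k, lam w δ z j (γ j)) * (u k / δ) * F γ) * hadd

lemma hasDeriv (w : Fin N → ℝ) (δ : ℝ) (f : (Fin N → ℝ) → ℝ) (y u : Fin N → ℝ) (t : ℝ) :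
    HasDerivAt (fun s => interpLam w δ f (y + s • u))
      (∑ γ : Fin N → Bool,
        (∑ k, (∏ j ∈ Finset.univ.erase k, lam w δ (y + t • u) j (γ j)) *
          (if γ k then u k / δ else -(u k / δ))) * f (vert w δ γ)) t := by
  have hfac : ∀ (i : Fin N) (b : Bool),
      HasDerivAt (fun s : ℝ => lam w δ (y + s • u) i b)
        (if b then u i / δ else -(u i / δ)) t := by
    intro i b
    have hzi : ∀ s : ℝ, (y + s • u) i = y i + s * u i := fun s => by simp
    have hbase : HasDerivAt (fun s : ℝ => ((y i + s * u i) - w i) / δ) (u i / δ) t := by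
      have h1 : HasDerivAt (fun s : ℝ => y i + s * u i) (u i) t :=
        (hasDerivAt_mul_const (u i)).const_add (y i)
      exact (h1.sub_const (w i)).div_const δ
    cases b with
    | true => simpa [lam, hzi] using hbase
    | false =>
        have h2 := hbase.const_sub 1
        have hder : -(u i / δ) = 0 - u i / δ := by ring
        simpa [lam, hzi, sub_eq_add_neg, neg_div] using h2
  have hterm : ∀ γ : Fin N → Bool,
      HasDerivAt (fun s : ℝ => (∏ i, lam w δ (y + s • u) i (γ i)) * f (vert w δ γ))
        ((∑ k, (∏ j ∈ Finset.univ.erase k, lam w δ (y + t • u) j (γ j)) *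
          (if γ k then u k / δ else -(u k / δ))) * f (vert w δ γ)) t := by
    intro γ
    have hp := HasDerivAt.finset_prod (u := Finset.univ)
      (f := fun i s => lam w δ (y + s • u) i (γ i))
      (f' := fun i => if γ i then u i / δ else -(u i / δ))
      (fun i _ => hfac i (γ i))
    simpa [smul_eq_mul] using hp.mul_const (f (vert w δ γ))
  have hsum := HasDerivAt.fun_sum (u := Finset.univ) (fun γ _ => hterm γ)
  simpa [interp_eq] using hsum

end Interp14

/-- Lipschitz estimate for the interpolation of a uniformly differentiable Lipschitz
function on a hypercube of edge length `δ`. -/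
theorem statement14 {N : ℕ} (hN : 1 ≤ N)
    (nn : (Fin N → ℝ) → ℝ)
    (nn_add : ∀ x y, nn (x + y) ≤ nn x + nn y)
    (nn_smul : ∀ (a : ℝ) (x : Fin N → ℝ), nn (a • x) = |a| * nn x)
    (nn_eq_zero : ∀ x, nn x = 0 ↔ x = 0)
    (K : ℝ) (hK : 0 < K)
    (hK2low : ∀ y : Fin N → ℝ, (1 / K) * nn y ≤ Real.sqrt (∑ i, (y i) ^ 2))
    (hK2high : ∀ y : Fin N → ℝ, Real.sqrt (∑ i, (y i) ^ 2) ≤ K * nn y)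
    (hK1low : ∀ y : Fin N → ℝ, (1 / K) * nn y ≤ ∑ i, |y i|)
    (hK1high : ∀ y : Fin N → ℝ, (∑ i, |y i|) ≤ K * nn y)
    (ε : ℝ) (hε : 0 < ε)
    (U : Set (Fin N → ℝ)) (hU : IsOpen U)
    (f : (Fin N → ℝ) → ℝ)
    (hfdiff : ∀ x ∈ U, DifferentiableAt ℝ f x)
    (L : ℝ) (hL : 0 ≤ L)
    (hfLip : ∀ x ∈ U, ∀ y ∈ U, |f x - f y| ≤ L * nn (x - y))
    (δ : ℝ) (hδ : 0 < δ)
    (hunif : ∀ x ∈ U, ∀ h : Fin N → ℝ, nn h ≤ K * δ → x + h ∈ U →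
      |f (x + h) - f x - fderiv ℝ f x h| ≤ ε * nn h)
    (w : Fin N → ℝ)
    (hCU : {x : Fin N → ℝ | ∀ i, x i ∈ Set.Icc (w i) (w i + δ)} ⊆ U) :
    ∀ x ∈ {x : Fin N → ℝ | ∀ i, x i ∈ Set.Icc (w i) (w i + δ)},
      ∀ y ∈ {x : Fin N → ℝ | ∀ i, x i ∈ Set.Icc (w i) (w i + δ)},
        |interpLam w δ f x - interpLam w δ f y| ≤ (K ^ 2 * ε + L) * nn (x - y) := by
  intro x hx y hy
  simp only [Set.mem_setOf_eq] at hx hy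
  set u : Fin N → ℝ := x - y with hu
  have hδ' : δ ≠ 0 := ne_of_gt hδ
  -- basic facts about nn
  have nn_zero : nn 0 = 0 := (nn_eq_zero 0).2 rfl
  have nn_neg : ∀ v : Fin N → ℝ, nn (-v) = nn v := by
    intro v
    have h := nn_smul (-1) v
    simpa using h
  have nn_nonneg : ∀ v : Fin N → ℝ, 0 ≤ nn v := by
    intro v
    have h := nn_add v (-v)
    simp only [add_neg_cancel, nn_zero, nn_neg] at h
    linarith
  -- bound on nn of basis vectors
  have hek : ∀ k : Fin N, nn (Pi.single k (1:ℝ)) ≤ K := by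
    intro k
    have h := hK1low (Pi.single k (1:ℝ))
    have hsum : (∑ i, |Pi.single k (1:ℝ) i|) = 1 := by
      simp [Pi.single_apply, apply_ite abs]
    rw [hsum] at h
    calc nn (Pi.single k (1:ℝ)) = K * ((1/K) * nn (Pi.single k (1:ℝ))) := by field_simp
      _ ≤ K * 1 := mul_le_mul_of_nonneg_left h (le_of_lt hK)
      _ = K := mul_one K
  -- vertices lie in the cube
  have hvertC : ∀ γ : Fin N → Bool, ∀ i, Interp14.vert w δ γ i ∈ Set.Icc (w i) (w i + δ) := by
    intro γ i
    cases hb : γ i <;> simp [Interp14.vert, hb, Set.mem_Icc] <;> linarith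
  have hvertU : ∀ γ : Fin N → Bool, Interp14.vert w δ γ ∈ U := fun γ => hCU (hvertC γ)
  -- operator-norm style bound on the derivative
  have hDle : ∀ v ∈ U, ∀ q : Fin N → ℝ, |fderiv ℝ f v q| ≤ L * nn q := by
    intro v hv q
    have hd := (hfdiff v hv).hasFDerivAt
    have hline : HasDerivAt (fun s : ℝ => v + s • q) q 0 := by
      simpa using ((hasDerivAt_id (0:ℝ)).smul_const q).const_add v
    have hval : v + (0:ℝ) • q = v := by simp
    have hφ : HasDerivAt (fun s : ℝ => f (v + s • q)) (fderiv ℝ f v q) 0 := by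
      have hd' : HasFDerivAt f (fderiv ℝ f v) ((fun s : ℝ => v + s • q) 0) := by
        simpa [hval] using hd
      have h := hd'.comp_hasDerivAt (0:ℝ) hline
      simpa [Function.comp_def] using h
    rw [hasDerivAt_iff_tendsto_slope] at hφ
    have hsub : (nhdsWithin (0:ℝ) (Set.Ioi 0)) ≤ nhdsWithin (0:ℝ) {(0:ℝ)}ᶜ :=
      nhdsWithin_mono _ (fun t ht => ne_of_gt ht)
    have hφ' := (hφ.mono_left hsub).abs
    have hUev : ∀ᶠ t in nhdsWithin (0:ℝ) (Set.Ioi 0), v + t • q ∈ U := by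
      have hcont : ContinuousAt (fun t : ℝ => v + t • q) 0 := by fun_prop
      have hmem : U ∈ nhds ((fun t : ℝ => v + t • q) 0) := by
        rw [show (fun t : ℝ => v + t • q) 0 = v from hval]
        exact hU.mem_nhds hv
      exact eventually_nhdsWithin_of_eventually_nhds (hcont.eventually_mem hmem)
    have hbd : ∀ᶠ t in nhdsWithin (0:ℝ) (Set.Ioi 0),
        |slope (fun s : ℝ => f (v + s • q)) 0 t| ≤ L * nn q := by
      filter_upwards [hUev, self_mem_nhdsWithin] with t htU ht
      have ht0 : (0:ℝ) < t := ht
      have hlip := hfLip _ htU v hv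
      have hdiff : (v + t • q) - v = t • q := by abel
      rw [hdiff, nn_smul, abs_of_pos ht0] at hlip
      have hslope : slope (fun s : ℝ => f (v + s • q)) 0 t = t⁻¹ * (f (v + t • q) - f v) := by
        simp [slope, hval]
      have habs : |t⁻¹ * (f (v + t • q) - f v)| = |f (v + t • q) - f v| / t := by
        rw [abs_mul, abs_inv, abs_of_pos ht0]; ring
      rw [hslope, habs, div_le_iff₀ ht0]
      calc |f (v + t • q) - f v| ≤ L * (t * nn q) := hlip
        _ = L * nn q * t := by ring
    exact le_of_tendsto hφ' hbd
  -- the vertex quantity bound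
  have hA : ∀ γ : Fin N → Bool,
      |∑ k, (u k / δ) * (if γ k then (-1:ℝ) else 1) *
        (f (Interp14.vert w δ (Function.update γ k (!γ k))) - f (Interp14.vert w δ γ))|
      ≤ (K ^ 2 * ε + L) * nn u := by
    intro γ
    set v : Fin N → ℝ := Interp14.vert w δ γ with hv
    have hvU : v ∈ U := hvertU γ
    set σ : Fin N → ℝ := fun k => if γ k then (-1:ℝ) else 1 with hσ
    have hσabs : ∀ k, |σ k| = 1 := by
      intro k; cases hb : γ k <;> simp [hσ, hb]
    have hσ2 : ∀ k, σ k * σ k = 1 := by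
      intro k; cases hb : γ k <;> simp [hσ, hb]
    have hflip : ∀ k, Interp14.vert w δ (Function.update γ k (!γ k))
        = v + (σ k * δ) • (Pi.single k (1:ℝ) : Fin N → ℝ) := by
      intro k; funext i
      rcases eq_or_ne i k with h | h
      · subst h
        cases hb : γ i <;>
          simp [Interp14.vert, hσ, hv, hb, Function.update_self, Pi.single_eq_same] <;> ring
      · cases hb : γ k <;>
          simp [Interp14.vert, hσ, hv, hb, Function.update_of_ne h, Pi.single_eq_of_ne h]
    have hnh : ∀ k, nn ((σ k * δ) • (Pi.single k (1:ℝ) : Fin N → ℝ)) = δ * nn (Pi.single k (1:ℝ)) := by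
      intro k; rw [nn_smul, abs_mul, hσabs, abs_of_pos hδ, one_mul]
    have hflipU : ∀ k, v + (σ k * δ) • (Pi.single k (1:ℝ) : Fin N → ℝ) ∈ U := by
      intro k; rw [← hflip]; exact hvertU _
    have hE : ∀ k, |f (v + (σ k * δ) • (Pi.single k (1:ℝ) : Fin N → ℝ)) - f v
        - fderiv ℝ f v ((σ k * δ) • (Pi.single k (1:ℝ) : Fin N → ℝ))|
        ≤ ε * (δ * nn (Pi.single k (1:ℝ))) := by
      intro k
      have hle : nn ((σ k * δ) • (Pi.single k (1:ℝ) : Fin N → ℝ)) ≤ K * δ := by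
        rw [hnh]
        calc δ * nn (Pi.single k (1:ℝ)) ≤ δ * K :=
              mul_le_mul_of_nonneg_left (hek k) (le_of_lt hδ)
          _ = K * δ := mul_comm _ _
      have h := hunif v hvU _ hle (hflipU k)
      rwa [hnh] at h
    have hlin : ∀ k, fderiv ℝ f v ((σ k * δ) • (Pi.single k (1:ℝ) : Fin N → ℝ))
        = (σ k * δ) * fderiv ℝ f v (Pi.single k (1:ℝ)) := by
      intro k; rw [map_smul, smul_eq_mul]
    have hterm : ∀ k, (u k / δ) * (if γ k then (-1:ℝ) else 1) *
        (f (Interp14.vert w δ (Function.update γ k (!γ k))) - f (Interp14.vert w δ γ))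
        = u k * fderiv ℝ f v (Pi.single k (1:ℝ))
          + (u k / δ) * σ k * (f (v + (σ k * δ) • (Pi.single k (1:ℝ) : Fin N → ℝ)) - f v
              - fderiv ℝ f v ((σ k * δ) • (Pi.single k (1:ℝ) : Fin N → ℝ))) := by
      intro k
      have hif : (if γ k then (-1:ℝ) else 1) = σ k := rfl
      rw [hif, hflip k, hlin k, ← hv]
      cases hb : γ k <;>
        simp only [hσ, hb, Bool.false_eq_true, if_false, if_true] <;>
        field_simp <;> ring
    have hDu : fderiv ℝ f v u = ∑ k, u k * fderiv ℝ f v (Pi.single k (1:ℝ)) := by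
      have hu' : u = ∑ k, (u k) • (Pi.single k (1:ℝ) : Fin N → ℝ) := by
        funext j
        rw [Finset.sum_apply]
        simp [Pi.single_apply]
      conv_lhs => rw [hu']
      rw [map_sum]
      simp [smul_eq_mul]
    have hsplit : (∑ k, (u k / δ) * (if γ k then (-1:ℝ) else 1) *
        (f (Interp14.vert w δ (Function.update γ k (!γ k))) - f (Interp14.vert w δ γ)))
        = fderiv ℝ f v u
          + ∑ k, (u k / δ) * σ k * (f (v + (σ k * δ) • (Pi.single k (1:ℝ) : Fin N → ℝ)) - f v
              - fderiv ℝ f v ((σ k * δ) • (Pi.single k (1:ℝ) : Fin N → ℝ))) := by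
      rw [Finset.sum_congr rfl (fun k _ => hterm k), Finset.sum_add_distrib, hDu]
    rw [hsplit]
    have hR : |∑ k, (u k / δ) * σ k * (f (v + (σ k * δ) • (Pi.single k (1:ℝ) : Fin N → ℝ)) - f v
        - fderiv ℝ f v ((σ k * δ) • (Pi.single k (1:ℝ) : Fin N → ℝ)))| ≤ K ^ 2 * ε * nn u := by
      have hRk : ∀ k : Fin N, |(u k / δ) * σ k * (f (v + (σ k * δ) • (Pi.single k (1:ℝ) : Fin N → ℝ)) - f v
          - fderiv ℝ f v ((σ k * δ) • (Pi.single k (1:ℝ) : Fin N → ℝ)))| ≤ ε * K * |u k| := by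
        intro k
        rw [abs_mul, abs_mul, hσabs, mul_one, abs_div, abs_of_pos hδ]
        calc |u k| / δ * |f (v + (σ k * δ) • (Pi.single k (1:ℝ) : Fin N → ℝ)) - f v
              - fderiv ℝ f v ((σ k * δ) • (Pi.single k (1:ℝ) : Fin N → ℝ))|
            ≤ |u k| / δ * (ε * (δ * nn (Pi.single k (1:ℝ)))) :=
              mul_le_mul_of_nonneg_left (hE k) (by positivity)
          _ = ε * (nn (Pi.single k (1:ℝ)) * |u k|) := by field_simp
          _ ≤ ε * (K * |u k|) := by
              apply mul_le_mul_of_nonneg_left _ (le_of_lt hε)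
              exact mul_le_mul_of_nonneg_right (hek k) (abs_nonneg _)
          _ = ε * K * |u k| := by ring
      calc |∑ k, (u k / δ) * σ k * (f (v + (σ k * δ) • (Pi.single k (1:ℝ) : Fin N → ℝ)) - f v
            - fderiv ℝ f v ((σ k * δ) • (Pi.single k (1:ℝ) : Fin N → ℝ)))|
          ≤ ∑ k, |(u k / δ) * σ k * (f (v + (σ k * δ) • (Pi.single k (1:ℝ) : Fin N → ℝ)) - f v
            - fderiv ℝ f v ((σ k * δ) • (Pi.single k (1:ℝ) : Fin N → ℝ)))| :=
            Finset.abs_sum_le_sum_abs _ _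
        _ ≤ ∑ k, ε * K * |u k| := Finset.sum_le_sum (fun k _ => hRk k)
        _ = ε * K * ∑ k, |u k| := by rw [Finset.mul_sum]
        _ ≤ ε * K * (K * nn u) := by
            apply mul_le_mul_of_nonneg_left (hK1high u)
            positivity
        _ = K ^ 2 * ε * nn u := by ring
    calc |fderiv ℝ f v u + ∑ k, (u k / δ) * σ k *
          (f (v + (σ k * δ) • (Pi.single k (1:ℝ) : Fin N → ℝ)) - f v
            - fderiv ℝ f v ((σ k * δ) • (Pi.single k (1:ℝ) : Fin N → ℝ)))|
        ≤ |fderiv ℝ f v u| + |∑ k, (u k / δ) * σ k *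
          (f (v + (σ k * δ) • (Pi.single k (1:ℝ) : Fin N → ℝ)) - f v
            - fderiv ℝ f v ((σ k * δ) • (Pi.single k (1:ℝ) : Fin N → ℝ)))| := abs_add_le _ _
      _ ≤ L * nn u + K ^ 2 * ε * nn u := add_le_add (hDle v hvU u) hR
      _ = (K ^ 2 * ε + L) * nn u := by ring
  -- nonnegativity of the weights
  have hW : ∀ z : Fin N → ℝ, (∀ i, z i ∈ Set.Icc (w i) (w i + δ)) →
      ∀ γ : Fin N → Bool, 0 ≤ ∏ i, Interp14.lam w δ z i (γ i) := by
    intro z hz γ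
    apply Finset.prod_nonneg
    intro i _
    cases hb : γ i
    · have h2 := (hz i).2
      simp only [Interp14.lam, hb, Bool.false_eq_true, if_false]
      rw [sub_nonneg, div_le_one hδ]
      linarith
    · have h1 := (hz i).1
      simp only [Interp14.lam, hb, if_true]
      apply div_nonneg _ (le_of_lt hδ)
      linarith
  -- derivative bound on the cube
  have hDbound : ∀ z : Fin N → ℝ, (∀ i, z i ∈ Set.Icc (w i) (w i + δ)) →
      |∑ γ : Fin N → Bool,
        (∑ k, (∏ j ∈ Finset.univ.erase k, Interp14.lam w δ z j (γ j)) *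
          (if γ k then u k / δ else -(u k / δ))) * f (Interp14.vert w δ γ)|
      ≤ (K ^ 2 * ε + L) * nn u := by
    intro z hz
    rw [Interp14.deriv_rewrite w δ z u (fun γ => f (Interp14.vert w δ γ))]
    calc |∑ γ : Fin N → Bool, (∏ i, Interp14.lam w δ z i (γ i)) *
          (∑ k, (u k / δ) * (if γ k then (-1:ℝ) else 1) *
            (f (Interp14.vert w δ (Function.update γ k (!γ k))) - f (Interp14.vert w δ γ)))|
        ≤ ∑ γ : Fin N → Bool, |(∏ i, Interp14.lam w δ z i (γ i)) *
          (∑ k, (u k / δ) * (if γ k then (-1:ℝ) else 1) *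
            (f (Interp14.vert w δ (Function.update γ k (!γ k))) - f (Interp14.vert w δ γ)))| :=
          Finset.abs_sum_le_sum_abs _ _
      _ ≤ ∑ γ : Fin N → Bool, (∏ i, Interp14.lam w δ z i (γ i)) * ((K ^ 2 * ε + L) * nn u) := by
          apply Finset.sum_le_sum
          intro γ _
          rw [abs_mul, abs_of_nonneg (hW z hz γ)]
          exact mul_le_mul_of_nonneg_left (hA γ) (hW z hz γ)
      _ = (K ^ 2 * ε + L) * nn u := by
          rw [← Finset.sum_mul, Interp14.weight_sum, one_mul]
  -- the segment stays in the cube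
  have hseg : ∀ t ∈ Set.Icc (0:ℝ) 1, ∀ i, (y + t • u) i ∈ Set.Icc (w i) (w i + δ) := by
    intro t ht i
    have h1 := (hx i).1; have h2 := (hx i).2
    have h3 := (hy i).1; have h4 := (hy i).2
    have hti : (y + t • u) i = y i + t * (x i - y i) := by simp [hu]
    rw [hti]
    constructor
    · nlinarith [ht.1, ht.2]
    · nlinarith [ht.1, ht.2]
  -- mean value inequality
  have hmvt := norm_image_sub_le_of_norm_deriv_le_segment_01'
    (f := fun t : ℝ => interpLam w δ f (y + t • u))
    (f' := fun t : ℝ => ∑ γ : Fin N → Bool,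
        (∑ k, (∏ j ∈ Finset.univ.erase k, Interp14.lam w δ (y + t • u) j (γ j)) *
          (if γ k then u k / δ else -(u k / δ))) * f (Interp14.vert w δ γ))
    (C := (K ^ 2 * ε + L) * nn u)
    (fun t _ => (Interp14.hasDeriv w δ f y u t).hasDerivWithinAt)
    (fun t ht => by
      rw [Real.norm_eq_abs]
      exact hDbound _ (hseg t (Set.Ico_subset_Icc_self ht)))
  have h1 : y + (1:ℝ) • u = x := by rw [one_smul, hu]; abel
  have h0 : y + (0:ℝ) • u = y := by simp
  rw [Real.norm_eq_abs] at hmvt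
  simp only [h1, h0] at hmvt
  exact hmvt
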